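/- If ℓ ≥ 2 trees are attached to ℓ distinguishable leaves of a fixed host tree, with the attached trees being ℓ pairwise distinct trees each having the same number of nodes, then the ℓ! resulting composite trees are pairwise distinct and all have the same path length. Consequently the number of t-ary trees with that path length is at least ℓ!. -/

import Mathlib

/-- A `t`-ary tree: either empty, or a root node with `t` ordered subtrees. -/
inductive TAry (t : ℕ) : Type where
  | nil : TAry t
  | node : (Fin t → TAry t) → TAry t

namespace TAry

variable {t : ℕ}

/-- Number of nodes of a `t`-ary tree. -/
def size : TAry t → ℕ
  | nil => 0
  | node c => 1 + ∑ i, (c i).size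

/-- Sum over nodes of `d +` (depth of the node). -/
def plFrom : TAry t → ℕ → ℕ
  | nil, _ => 0
  | node c, d => d + ∑ i, (c i).plFrom (d + 1)

/-- Path length: the sum of the depths of all nodes. -/
def pathLength (T : TAry t) : ℕ := T.plFrom 0

/-- Number of nodes at depth `j` (the profile `D_j`). -/
def depthCount : ℕ → TAry t → ℕ
  | _, nil => 0
  | 0, node _ => 1
  | j + 1, node c => ∑ i, depthCount j (c i)

/-- Number of leaves (nodes all of whose subtrees are empty). -/
def leaves : TAry t → ℕ
  | nil => 0
  | node c => max 1 (∑ i, (c i).leaves)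

end TAry

namespace TAry
variable {t : ℕ}

/-- Every internal (non-leaf) node has exactly one child. -/
def chain : TAry t → Prop
  | nil => True
  | node c => (∀ i, c i = nil) ∨ ∃ i, c i ≠ nil ∧ chain (c i) ∧ ∀ j, j ≠ i → c j = nil

/-- Number of leaves at depth `j`. -/
def leavesAt : ℕ → TAry t → ℕ
  | _, nil => 0
  | 0, node c => if (∑ i, (c i).size) = 0 then 1 else 0
  | j + 1, node c => ∑ i, leavesAt j (c i)

/-- The subtree of `T` at position `pos` (empty tree if the position is invalid). -/
def getAt : TAry t → List (Fin t) → TAry t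
  | T, [] => T
  | nil, _ :: _ => nil
  | node c, i :: rest => getAt (c i) rest

/-- Replace the subtree of `T` at position `pos` by `τ`. -/
def replaceAt : TAry t → List (Fin t) → TAry t → TAry t
  | _, [], τ => τ
  | nil, _ :: _, _ => nil
  | node c, i :: rest, τ => node (fun j => if j = i then replaceAt (c i) rest τ else c j)

/-- Attach the trees `τs i` at the positions `pos i`, for `i = 0, …, ℓ-1`. -/
def attachAll {ℓ : ℕ} (T : TAry t) (pos : Fin ℓ → List (Fin t)) (τs : Fin ℓ → TAry t) :
    TAry t :=
  (List.finRange ℓ).foldl (fun A i => replaceAt A (pos i) (τs i)) T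

end TAry

/-- The binary entropy function (natural logarithm). -/
noncomputable def binEnt (x : ℝ) : ℝ := -x * Real.log x - (1 - x) * Real.log (1 - x)

/-- Number of `t`-ary trees with exactly `n` nodes. -/
noncomputable def Ct (t n : ℕ) : ℕ := Nat.card {T : TAry t // T.size = n}

/-- Number of `t`-ary trees with path length exactly `p`. -/
noncomputable def Tt (t p : ℕ) : ℕ := Nat.card {T : TAry t // T.pathLength = p}


namespace TAry
variable {t : ℕ}

lemma getAt_nil' (p : List (Fin t)) : getAt (nil : TAry t) p = nil := by
  cases p <;> rfl

@[simp] lemma getAt_list_nil (T : TAry t) : getAt T [] = T := by cases T <;> rfl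

@[simp] lemma replaceAt_list_nil (T τ : TAry t) : replaceAt T [] τ = τ := by cases T <;> rfl

lemma getAt_append (p s : List (Fin t)) : ∀ (T : TAry t),
    getAt T (p ++ s) = getAt (getAt T p) s := by
  induction p with
  | nil => intro T; simp
  | cons i rest ih =>
    intro T
    cases T with
    | nil => simp [getAt, getAt_nil']
    | node c => simp [getAt, ih]

lemma plFrom_eq (T : TAry t) : ∀ d, plFrom T d = pathLength T + d * size T := by
  induction T with
  | nil => intro d; simp [plFrom, pathLength, size]
  | node c ih =>
    intro d
    have h1 : ∀ d', plFrom (node c) d' = d' + ∑ i, (pathLength (c i) + d' * size (c i) + size (c i)) := by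
      intro d'
      simp only [plFrom]
      congr 1
      refine Finset.sum_congr rfl fun i _ => ?_
      rw [ih i (d' + 1)]; ring
    rw [pathLength, h1 d, h1 0]
    simp only [size, Finset.sum_add_distrib, Finset.mul_sum, zero_mul, zero_add]
    rw [mul_add, Finset.mul_sum, Finset.sum_const_zero]
    ring

lemma getAt_replaceAt_self (τ : TAry t) : ∀ (p : List (Fin t)) (T : TAry t),
    getAt T p ≠ nil → getAt (replaceAt T p τ) p = τ := by
  intro p
  induction p with
  | nil => intro T _; simp
  | cons i rest ih =>
    intro T h
    cases T with
    | nil => simp [getAt_nil'] at h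
    | node c =>
      simp only [replaceAt, getAt, if_pos rfl]
      exact ih (c i) h

def Incomp (p p' : List (Fin t)) : Prop := ¬ p <+: p' ∧ ¬ p' <+: p

lemma getAt_replaceAt_other (τ : TAry t) : ∀ (p p' : List (Fin t)) (T : TAry t),
    Incomp p p' → getAt (replaceAt T p τ) p' = getAt T p' := by
  intro p
  induction p with
  | nil => intro p' T h; exact absurd (List.nil_prefix) h.1
  | cons i rest ih =>
    intro p' T h
    cases p' with
    | nil => exact absurd (List.nil_prefix) h.2
    | cons i' rest' =>
      cases T with
      | nil => rfl
      | node c =>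
        by_cases hii : i' = i
        · subst hii
          simp only [replaceAt, getAt, if_pos rfl]
          refine ih rest' (c i') ⟨fun hp => h.1 ?_, fun hp => h.2 ?_⟩
          · exact (List.prefix_cons_inj i').mpr hp
          · exact (List.prefix_cons_inj i').mpr hp
        · simp only [replaceAt, getAt, if_neg hii]

lemma plFrom_replaceAt (τ : TAry t) : ∀ (p : List (Fin t)) (T : TAry t) (d : ℕ),
    getAt T p ≠ nil →
    plFrom (replaceAt T p τ) d + plFrom (getAt T p) (d + p.length) =
      plFrom T d + plFrom τ (d + p.length) := by
  intro p
  induction p with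
  | nil => intro T d _; simp; omega
  | cons i rest ih =>
    intro T d h
    cases T with
    | nil => simp [getAt_nil'] at h
    | node c =>
      have h' : getAt (c i) rest ≠ nil := h
      have IH := ih (c i) (d + 1) h'
      simp only [replaceAt, getAt, plFrom, List.length_cons]
      have e1 : ∑ j, plFrom (if j = i then replaceAt (c i) rest τ else c j) (d + 1) =
          plFrom (replaceAt (c i) rest τ) (d + 1) +
            ∑ j ∈ Finset.univ.erase i, plFrom (c j) (d + 1) := by
        rw [← Finset.add_sum_erase _ _ (Finset.mem_univ i), if_pos rfl]
        congr 1
        refine Finset.sum_congr rfl fun j hj => ?_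
        rw [if_neg (Finset.mem_erase.mp hj).1]
      have e2 : ∑ j, plFrom (c j) (d + 1) =
          plFrom (c i) (d + 1) + ∑ j ∈ Finset.univ.erase i, plFrom (c j) (d + 1) := by
        rw [← Finset.add_sum_erase _ _ (Finset.mem_univ i)]
      rw [e1, e2]
      have : d + 1 + rest.length = d + (rest.length + 1) := by omega
      rw [this] at IH
      omega

end TAry

namespace TAry

@[simp] lemma plFrom_leaf (d : ℕ) : plFrom (node (fun _ => (nil : TAry t))) d = d := by
  simp [plFrom]

lemma fold_spec {ℓ : ℕ} (pos : Fin ℓ → List (Fin t))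
    (hinc : ∀ i j : Fin ℓ, i ≠ j → Incomp (pos i) (pos j))
    (τs' : Fin ℓ → TAry t) :
    ∀ (L : List (Fin ℓ)) (A : TAry t), L.Nodup →
      (∀ j ∈ L, getAt A (pos j) = node (fun _ => nil)) →
      (∀ j ∉ L, getAt (L.foldl (fun B i => replaceAt B (pos i) (τs' i)) A) (pos j)
          = getAt A (pos j)) ∧
      (∀ j ∈ L, getAt (L.foldl (fun B i => replaceAt B (pos i) (τs' i)) A) (pos j) = τs' j) ∧
      (L.foldl (fun B i => replaceAt B (pos i) (τs' i)) A).plFrom 0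
          + (L.map (fun i => (pos i).length)).sum =
        A.plFrom 0 +
          (L.map (fun i => pathLength (τs' i) + (pos i).length * size (τs' i))).sum := by
  intro L
  induction L with
  | nil => intro A _ _; exact ⟨fun _ _ => rfl, fun j hj => absurd hj List.not_mem_nil, by simp⟩
  | cons i L ih =>
    intro A hnd hA
    have hiL : i ∉ L := (List.nodup_cons.mp hnd).1
    have hndL : L.Nodup := (List.nodup_cons.mp hnd).2
    set A' : TAry t := replaceAt A (pos i) (τs' i) with hA'def
    have hAi : getAt A (pos i) = node (fun _ => nil) := hA i List.mem_cons_self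
    have hA' : ∀ j ∈ L, getAt A' (pos j) = node (fun _ => nil) := by
      intro j hj
      have hji : j ≠ i := fun h => hiL (h ▸ hj)
      rw [getAt_replaceAt_other _ _ _ _ (hinc i j (Ne.symm hji))]
      exact hA j (List.mem_cons_of_mem i hj)
    obtain ⟨ha, hb, hc⟩ := ih A' hndL hA'
    have hfold : (i :: L).foldl (fun B k => replaceAt B (pos k) (τs' k)) A =
        L.foldl (fun B k => replaceAt B (pos k) (τs' k)) A' := rfl
    refine ⟨?_, ?_, ?_⟩
    · intro j hj
      have hjL : j ∉ L := fun h => hj (List.mem_cons_of_mem i h)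
      have hji : j ≠ i := fun h => hj (h ▸ List.mem_cons_self)
      rw [hfold, ha j hjL, hA'def, getAt_replaceAt_other _ _ _ _ (hinc i j (Ne.symm hji))]
    · intro j hj
      rcases List.mem_cons.mp hj with h | h
      · subst h
        rw [hfold, ha j hiL, hA'def, getAt_replaceAt_self _ _ _ (by rw [hAi]; intro h; cases h)]
      · rw [hfold]; exact hb j h
    · rw [hfold]
      have hrep := plFrom_replaceAt (τs' i) (pos i) A 0 (by rw [hAi]; intro h; cases h)
      rw [hAi, plFrom_leaf, ← hA'def] at hrep
      simp only [Nat.zero_add] at hrep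
      rw [plFrom_eq (τs' i)] at hrep
      simp only [List.map_cons, List.sum_cons]
      omega

lemma size_le_plFrom : ∀ (T : TAry t) (d : ℕ), size T ≤ plFrom T (d + 1) := by
  intro T
  induction T with
  | nil => intro d; simp [size, plFrom]
  | node c ih =>
    intro d
    simp only [size, plFrom]
    have : ∑ i, size (c i) ≤ ∑ i, plFrom (c i) (d + 1 + 1) :=
      Finset.sum_le_sum fun i _ => ih i (d + 1)
    omega

lemma size_le_pathLength_succ (T : TAry t) : size T ≤ pathLength T + 1 := by
  cases T with
  | nil => simp [size, pathLength, plFrom]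
  | node c =>
    simp only [size, pathLength, plFrom]
    have : ∑ i, size (c i) ≤ ∑ i, plFrom (c i) (0 + 1) :=
      Finset.sum_le_sum fun i _ => size_le_plFrom (c i) 0
    omega

end TAry

/-- Bounded-depth trees: a finite type receiving injectively all trees of size ≤ n. -/
def Bnd (t : ℕ) : ℕ → Type
  | 0 => Unit
  | n + 1 => Option (Fin t → Bnd t n)

noncomputable def Bnd.fintype (t : ℕ) : ∀ n, Fintype (Bnd t n)
  | 0 => inferInstanceAs (Fintype Unit)
  | n + 1 =>
    haveI : Fintype (Bnd t n) := Bnd.fintype t n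
    inferInstanceAs (Fintype (Option (Fin t → Bnd t n)))

lemma Bnd.finite (t n : ℕ) : Finite (Bnd t n) :=
  haveI := Bnd.fintype t n
  Finite.of_fintype _

def toB (t : ℕ) : (n : ℕ) → TAry t → Bnd t n
  | 0, _ => ()
  | _ + 1, TAry.nil => none
  | n + 1, TAry.node c => some (fun i => toB t n (c i))

lemma toB_inj (t : ℕ) : ∀ (n : ℕ) (T T' : TAry t), T.size ≤ n → T'.size ≤ n →
    toB t n T = toB t n T' → T = T' := by
  intro n
  induction n with
  | zero =>
    intro T T' h h' _
    cases T with
    | nil => cases T' with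
      | nil => rfl
      | node c => simp [TAry.size] at h'
    | node c => simp [TAry.size] at h
  | succ n ih =>
    intro T T' h h' he
    cases T with
    | nil => cases T' with
      | nil => rfl
      | node c => simp [toB] at he
    | node c => cases T' with
      | nil => simp [toB] at he
      | node c' =>
        simp only [toB] at he
        have he' : (some (fun i => toB t n (c i)) : Option (Fin t → Bnd t n)) =
            some (fun i => toB t n (c' i)) := he
        rw [Option.some.injEq] at he' 
        have hsz : ∀ i, (c i).size ≤ n := by
          intro i
          have h2 : (c i).size ≤ ∑ j, (c j).size :=
            Finset.single_le_sum (f := fun j => (c j).size) (fun _ _ => Nat.zero_le _)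
              (Finset.mem_univ i)
          simp only [TAry.size] at h
          omega
        have hsz' : ∀ i, (c' i).size ≤ n := by
          intro i
          have h2 : (c' i).size ≤ ∑ j, (c' j).size :=
            Finset.single_le_sum (f := fun j => (c' j).size) (fun _ _ => Nat.zero_le _)
              (Finset.mem_univ i)
          simp only [TAry.size] at h'
          omega
        have hcc : c = c' := funext fun i => by
          have hci := congrFun he' i
          exact ih (c i) (c' i) (hsz i) (hsz' i) hci
        rw [hcc]

lemma finite_pathLength (t P : ℕ) : Finite {T' : TAry t // T'.pathLength = P} := by
  haveI := Bnd.finite t (P + 1)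
  apply Finite.of_injective (f := fun T' : {T' : TAry t // T'.pathLength = P} =>
    toB t (P + 1) T'.1)
  intro ⟨T, hT⟩ ⟨T', hT'⟩ h
  have b1 : T.size ≤ P + 1 := hT ▸ TAry.size_le_pathLength_succ T
  have b2 : T'.size ≤ P + 1 := hT' ▸ TAry.size_le_pathLength_succ T'
  exact Subtype.ext (toB_inj t (P + 1) T T' b1 b2 h)

/-- Attaching `ℓ` pairwise distinct trees of equal size to `ℓ` distinct leaves of a host
tree in the `ℓ!` possible orders yields pairwise distinct trees, all of the same path
length; hence the number of `t`-ary trees with that path length is at least `ℓ!`. -/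
theorem stmt18 (t ℓ q : ℕ) (ht : 2 ≤ t) (hℓ : 2 ≤ ℓ) (hq : 1 ≤ q)
    (T : TAry t) (pos : Fin ℓ → List (Fin t)) (hposinj : Function.Injective pos)
    (hleaf : ∀ i, TAry.getAt T (pos i) = TAry.node (fun _ => TAry.nil))
    (τs : Fin ℓ → TAry t) (hτinj : Function.Injective τs)
    (hτq : ∀ i, (τs i).size = q) :
    (∀ π σ : Equiv.Perm (Fin ℓ),
      (TAry.attachAll T pos (τs ∘ π)).pathLength =
        (TAry.attachAll T pos (τs ∘ σ)).pathLength) ∧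
    (∀ π σ : Equiv.Perm (Fin ℓ),
      TAry.attachAll T pos (τs ∘ π) = TAry.attachAll T pos (τs ∘ σ) → π = σ) ∧
    Nat.factorial ℓ ≤
      Nat.card {T' : TAry t // T'.pathLength = (TAry.attachAll T pos τs).pathLength} := by
  classical
  have hnp : ∀ i j : Fin ℓ, i ≠ j → ¬ pos i <+: pos j := by
    rintro i j hij ⟨s, hs⟩
    cases s with
    | nil => rw [List.append_nil] at hs; exact hij (hposinj hs)
    | cons k s' =>
      have hx := hleaf j
      rw [← hs, TAry.getAt_append, hleaf i] at hx
      simp only [TAry.getAt] at hx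
      rw [TAry.getAt_nil'] at hx
      cases hx
  have hinc : ∀ i j : Fin ℓ, i ≠ j → TAry.Incomp (pos i) (pos j) :=
    fun i j hij => ⟨hnp i j hij, hnp j i hij.symm⟩
  have hfs := fun f : Fin ℓ → TAry t =>
    TAry.fold_spec pos hinc f (List.finRange ℓ) T (List.nodup_finRange ℓ)
      (fun j _ => hleaf j)
  have hget : ∀ (f : Fin ℓ → TAry t) (j : Fin ℓ),
      TAry.getAt (TAry.attachAll T pos f) (pos j) = f j :=
    fun f j => (hfs f).2.1 j (List.mem_finRange j)
  have hpl : ∀ π : Equiv.Perm (Fin ℓ),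
      (TAry.attachAll T pos (τs ∘ π)).pathLength
          + ((List.finRange ℓ).map (fun i => (pos i).length)).sum
        = T.plFrom 0 + ((∑ i, (τs i).pathLength) + ∑ i, (pos i).length * q) := by
    intro π
    have h := (hfs (τs ∘ π)).2.2
    have hmap : ((List.finRange ℓ).map
        (fun i => ((τs ∘ π) i).pathLength + (pos i).length * ((τs ∘ π) i).size)).sum
        = (∑ i, (τs i).pathLength) + ∑ i, (pos i).length * q := by
      rw [← Fin.sum_univ_def]
      have : ∀ i : Fin ℓ, ((τs ∘ π) i).pathLength + (pos i).length * ((τs ∘ π) i).size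
          = (τs (π i)).pathLength + (pos i).length * q := by
        intro i; simp [Function.comp, hτq (π i)]
      rw [Finset.sum_congr rfl fun i _ => this i, Finset.sum_add_distrib]
      congr 1
      exact Equiv.sum_comp π (fun i => (τs i).pathLength)
    rw [hmap] at h
    exact h
  have part1 : ∀ π σ : Equiv.Perm (Fin ℓ),
      (TAry.attachAll T pos (τs ∘ π)).pathLength =
        (TAry.attachAll T pos (τs ∘ σ)).pathLength := by
    intro π σ
    have h1 := hpl π
    have h2 := hpl σ
    omega
  have part2 : ∀ π σ : Equiv.Perm (Fin ℓ),
      TAry.attachAll T pos (τs ∘ π) = TAry.attachAll T pos (τs ∘ σ) → π = σ := by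
    intro π σ h
    apply Equiv.ext
    intro j
    apply hτinj
    have h1 := hget (τs ∘ π) j
    have h2 := hget (τs ∘ σ) j
    rw [h] at h1
    exact h1.symm.trans h2
  refine ⟨part1, part2, ?_⟩
  haveI := finite_pathLength t ((TAry.attachAll T pos τs).pathLength)
  have hone : τs ∘ ⇑(1 : Equiv.Perm (Fin ℓ)) = τs := rfl
  set P := (TAry.attachAll T pos τs).pathLength with hP
  have hf : ∀ π : Equiv.Perm (Fin ℓ), (TAry.attachAll T pos (τs ∘ π)).pathLength = P := by
    intro π
    rw [hP, ← hone]
    exact part1 π 1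
  have hinj : Function.Injective (fun π : Equiv.Perm (Fin ℓ) =>
      (⟨TAry.attachAll T pos (τs ∘ π), hf π⟩ : {T' : TAry t // T'.pathLength = P})) := by
    intro π σ h
    exact part2 π σ (congrArg Subtype.val h)
  calc Nat.factorial ℓ = Nat.card (Equiv.Perm (Fin ℓ)) := by
        simp [Nat.card_eq_fintype_card, Fintype.card_perm, Fintype.card_fin]
    _ ≤ Nat.card {T' : TAry t // T'.pathLength = P} :=
        Nat.card_le_card_of_injective _ hinj
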